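/- Let p be a prime, let n ≥ 2, and let Δ_n(p) be the kernel of the reduction homomorphism SL_n(ℤ) → SL_n(ℤ/pℤ). Then every finite subset of Δ_n(p) that generates a profinitely dense subgroup of Δ_n(p) has at least n² − 1 elements; in particular, every profinitely dense free subgroup of Δ_n(p) of finite rank has rank at least n² − 1. -/

import Mathlib

/-- A subgroup `H` of `G` is profinitely dense if it maps onto every finite quotient,
equivalently `H · N = G` for every finite-index normal subgroup `N` of `G`. -/
def ProfinitelyDense {G : Type*} [Group G] (H : Subgroup G) : Prop :=
  ∀ N : Subgroup G, N.Normal → N.FiniteIndex → ∀ g : G, ∃ h ∈ H, ∃ k ∈ N, g = h * k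

/-- A subset `S` of a group freely generates the subgroup it generates:
the canonical map from the free group on `S` is injective. -/
def FreelyGenerates {G : Type*} [Group G] (S : Set G) : Prop :=
  Function.Injective (FreeGroup.lift (fun s : S => (s : G)))

open Matrix Module


open Matrix

section CongrAux

variable (p : ℕ) {n : ℕ}

/-- entrywise `(M-1)/p` reduced mod `p` -/
def fmat (M : Matrix (Fin n) (Fin n) ℤ) : Matrix (Fin n) (Fin n) (ZMod p) :=
  Matrix.of fun i j => ((((M - 1) i j) / (p : ℤ) : ℤ) : ZMod p)

lemma fmat_one : fmat p (1 : Matrix (Fin n) (Fin n) ℤ) = 0 := by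
  ext i j
  simp [fmat]

lemma fmat_mul (hp : p ≠ 0) {M N : Matrix (Fin n) (Fin n) ℤ}
    (hM : ∀ i j, (p : ℤ) ∣ (M - 1) i j) (hN : ∀ i j, (p : ℤ) ∣ (N - 1) i j) :
    fmat p (M * N) = fmat p M + fmat p N := by
  have hpz : (p : ℤ) ≠ 0 := Int.natCast_ne_zero.mpr hp
  ext i j
  obtain ⟨a, ha⟩ := hM i j
  obtain ⟨b, hb⟩ := hN i j
  have hprod : (p : ℤ) * p ∣ ((M - 1) * (N - 1)) i j := by
    rw [Matrix.mul_apply]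
    exact Finset.dvd_sum fun k _ => mul_dvd_mul (hM i k) (hN k j)
  obtain ⟨c, hc⟩ := hprod
  have key : (M * N - 1) i j = (p : ℤ) * (a + b + p * c) := by
    have h1 : M * N - 1 = (M - 1) + (N - 1) + (M - 1) * (N - 1) := by noncomm_ring
    rw [h1]
    simp only [Matrix.add_apply]
    rw [ha, hb, hc]; ring
  simp only [fmat, Matrix.of_apply, Matrix.add_apply, key, ha, hb]
  rw [Int.mul_ediv_cancel_left _ hpz, Int.mul_ediv_cancel_left _ hpz,
    Int.mul_ediv_cancel_left _ hpz]
  push_cast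
  simp

lemma fmat_one_add_smul (hp : p ≠ 0) (D : Matrix (Fin n) (Fin n) ℤ) :
    fmat p (1 + (p : ℤ) • D) = D.map (Int.cast : ℤ → ZMod p) := by
  have hpz : (p : ℤ) ≠ 0 := Int.natCast_ne_zero.mpr hp
  ext a b
  have h1 : (1 + (p : ℤ) • D - 1) = (p : ℤ) • D := add_sub_cancel_left 1 _
  have h2 : ((p : ℤ) • D) a b = (p : ℤ) * D a b := by
    rw [Matrix.smul_apply, smul_eq_mul]
  simp only [fmat, Matrix.of_apply, h1, h2, Int.mul_ediv_cancel_left _ hpz,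
    Matrix.map_apply]

end CongrAux



section CongrAux2
variable (p : ℕ) {n : ℕ}

lemma transvection_eq (i j : Fin n) (c : ℤ) :
    Matrix.transvection i j ((p : ℤ) * c) = 1 + (p : ℤ) • Matrix.single i j c := by
  rw [Matrix.transvection, smul_single, smul_eq_mul]

lemma triple_eq (i j : Fin n) (hij : i ≠ j) :
    Matrix.transvection i j (-1 : ℤ) * Matrix.transvection j i (-(p : ℤ)) *
        Matrix.transvection i j 1 =
      1 + (p : ℤ) • (Matrix.single i i (1 : ℤ) - Matrix.single j j 1 +
        Matrix.single i j 1 - Matrix.single j i 1) := by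
  have hexp : ∀ A B C : Matrix (Fin n) (Fin n) ℤ, (1 + A) * (1 + B) * (1 + C) =
      1 + A + B + C + A * B + A * C + B * C + A * B * C := by intros; noncomm_ring
  have hAB : Matrix.single i j (-1 : ℤ) * Matrix.single j i (-(p : ℤ)) =
      Matrix.single i i ((p : ℤ)) := by
    rw [Matrix.single_mul_single_same]; norm_num
  have hAC : Matrix.single i j (-1 : ℤ) * Matrix.single i j (1 : ℤ) = 0 :=
    Matrix.single_mul_single_of_ne _ _ _ _ (Ne.symm hij) _
  have hBC : Matrix.single j i (-(p : ℤ)) * Matrix.single i j (1 : ℤ) =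
      Matrix.single j j (-(p : ℤ)) := by
    rw [Matrix.single_mul_single_same]; norm_num
  have hABC : Matrix.single i j (-1 : ℤ) * Matrix.single j i (-(p : ℤ)) *
      Matrix.single i j (1 : ℤ) = Matrix.single i j ((p : ℤ)) := by
    rw [hAB, Matrix.single_mul_single_same]; norm_num
  have hCA : Matrix.single i j (1 : ℤ) = -Matrix.single i j (-1 : ℤ) := by
    rw [← neg_one_smul ℤ (Matrix.single i j (-1 : ℤ)), smul_single]; norm_num
  have hjj : Matrix.single j j (-(p : ℤ)) = -Matrix.single j j ((p : ℤ)) := by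
    rw [← neg_one_smul ℤ (Matrix.single j j ((p : ℤ))), smul_single]; norm_num
  have hji : Matrix.single j i (-(p : ℤ)) = -Matrix.single j i ((p : ℤ)) := by
    rw [← neg_one_smul ℤ (Matrix.single j i ((p : ℤ))), smul_single]; norm_num
  have hsmul : (p : ℤ) • (Matrix.single i i (1 : ℤ) - Matrix.single j j 1 +
      Matrix.single i j 1 - Matrix.single j i 1) =
      Matrix.single i i ((p : ℤ)) - Matrix.single j j ((p : ℤ)) +
        Matrix.single i j ((p : ℤ)) - Matrix.single j i ((p : ℤ)) := by
    simp [smul_sub, smul_add]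
  rw [Matrix.transvection, Matrix.transvection, Matrix.transvection,
    hexp, hABC, hAB, hAC, hBC, hsmul, hjj, hji, hCA]
  abel

end CongrAux2



lemma rank_lower_bound {K : Type*} [Field K] {n : ℕ} (hn : 2 ≤ n)
    (W : Submodule K (Matrix (Fin n) (Fin n) K))
    (hoff : ∀ i j : Fin n, i ≠ j → Matrix.single i j (1 : K) ∈ W)
    (hdiag : ∀ i j : Fin n, i ≠ j →
      Matrix.single i i (1 : K) - Matrix.single j j (1 : K) ∈ W) :
    (n ^ 2 - 1 : ℕ) ≤ Module.finrank K W := by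
  have hz : (0 : ℕ) < n := by omega
  set z : Fin n := ⟨0, hz⟩ with hzdef
  -- the trace-zero subspace is contained in W
  have hker : LinearMap.ker (Matrix.traceLinearMap (Fin n) K K) ≤ W := by
    intro A hA
    have htr : ∑ i, A i i = 0 := hA
    have h2 : ∑ i, A i i • (Matrix.single i i (1 : K) - Matrix.single z z 1) =
        ∑ i, Matrix.single i i (A i i) := by
      simp_rw [smul_sub]
      have h3 : ∑ i, A i i • Matrix.single z z (1 : K) =
          (∑ i, A i i) • Matrix.single z z (1 : K) := (Finset.sum_smul).symm
      rw [Finset.sum_sub_distrib, h3, htr, zero_smul, sub_zero]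
      simp
    have hdecomp : A = (∑ i, ∑ j, if i = j then 0 else Matrix.single i j (A i j)) +
        ∑ i, A i i • (Matrix.single i i (1 : K) - Matrix.single z z 1) := by
      rw [h2]
      have hsplit : ∀ i j : Fin n, Matrix.single i j (A i j) =
          (if i = j then 0 else Matrix.single i j (A i j)) +
          (if i = j then Matrix.single i j (A i j) else 0) := by
        intro i j; split_ifs <;> simp
      calc A = ∑ i, ∑ j, Matrix.single i j (A i j) := matrix_eq_sum_single A
        _ = (∑ i, ∑ j, if i = j then 0 else Matrix.single i j (A i j)) +
            ∑ i, ∑ j, (if i = j then Matrix.single i j (A i j) else 0) := by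
          rw [← Finset.sum_add_distrib]
          refine Finset.sum_congr rfl fun i _ => ?_
          rw [← Finset.sum_add_distrib]
          exact Finset.sum_congr rfl fun j _ => hsplit i j
        _ = (∑ i, ∑ j, if i = j then 0 else Matrix.single i j (A i j)) +
            ∑ i, Matrix.single i i (A i i) := by
          congr 1
          exact Finset.sum_congr rfl fun i _ => by simp
    rw [hdecomp]
    refine Submodule.add_mem W (Submodule.sum_mem W fun i _ => Submodule.sum_mem W fun j _ => ?_)
      (Submodule.sum_mem W fun i _ => ?_)
    · split_ifs with h
      · exact W.zero_mem
      · have : Matrix.single i j (A i j) = A i j • Matrix.single i j (1 : K) := by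
          rw [smul_single, smul_eq_mul, mul_one]
        rw [this]
        exact W.smul_mem _ (hoff i j h)
    · rcases eq_or_ne i z with rfl | h
      · simp
      · exact W.smul_mem _ (hdiag i z h)
  -- rank computation
  have hsurj : LinearMap.range (Matrix.traceLinearMap (Fin n) K K) = ⊤ := by
    rw [LinearMap.range_eq_top]
    intro c
    exact ⟨Matrix.single z z c, Matrix.trace_single_eq_same z c⟩
  have hrank := LinearMap.finrank_range_add_finrank_ker (Matrix.traceLinearMap (Fin n) K K)
  rw [hsurj, finrank_top] at hrank
  have hmat : finrank K (Matrix (Fin n) (Fin n) K) = n * n := by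
    rw [Module.finrank_matrix]
    simp
  rw [Module.finrank_self, hmat] at hrank
  have hmono : finrank K (LinearMap.ker (Matrix.traceLinearMap (Fin n) K K)) ≤ finrank K W :=
    Submodule.finrank_mono hker
  have : finrank K (LinearMap.ker (Matrix.traceLinearMap (Fin n) K K)) = n * n - 1 := by omega
  rw [this] at hmono
  calc (n ^ 2 - 1 : ℕ) = n * n - 1 := by rw [sq]
    _ ≤ finrank K W := hmono

section CongrAuxMain

variable (p : ℕ) {n : ℕ}

lemma map_sb (i j : Fin n) (c : ℤ) :
    (Matrix.single i j c).map (Int.cast : ℤ → ZMod p) =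
      Matrix.single i j ((c : ZMod p)) := by
  ext a b
  simp [Matrix.map_apply, Matrix.single, Matrix.of_apply, apply_ite (Int.cast : ℤ → ZMod p)]

lemma redmod_one_add_smul (D : Matrix (Fin n) (Fin n) ℤ) :
    (1 + (p : ℤ) • D).map (Int.cast : ℤ → ZMod p) = 1 := by
  ext a b
  have h2 : ((p : ℤ) • D) a b = (p : ℤ) * D a b := by rw [Matrix.smul_apply, smul_eq_mul]
  simp only [Matrix.map_apply, Matrix.add_apply, h2, Int.cast_add, Int.cast_mul]
  push_cast
  simp only [ZMod.natCast_self, zero_mul, add_zero]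
  simp [Matrix.one_apply, apply_ite (Int.cast : ℤ → ZMod p)]

end CongrAuxMain


/-- Every finite subset of the principal congruence subgroup `Δ_n(p)` generating a
profinitely dense subgroup of `Δ_n(p)` has at least `n² − 1` elements; in particular
every profinitely dense free subgroup of finite rank has rank at least `n² − 1`. -/
theorem card_ge_of_profinitely_dense_in_congruence_subgroup
    (p : ℕ) (hp : p.Prime) (n : ℕ) (hn : 2 ≤ n)
    (Δ : Subgroup (Matrix.SpecialLinearGroup (Fin n) ℤ))
    (hΔ : Δ = (Matrix.SpecialLinearGroup.map (n := Fin n)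
      (Int.castRingHom (ZMod p))).ker) :
    (∀ S : Finset Δ,
      ProfinitelyDense (Subgroup.closure (S : Set Δ)) → n ^ 2 - 1 ≤ S.card) ∧
    (∀ S : Set Δ, S.Finite → FreelyGenerates S →
      ProfinitelyDense (Subgroup.closure S) → n ^ 2 - 1 ≤ S.ncard) := by
  haveI := Fact.mk hp
  haveI : NeZero p := ⟨hp.ne_zero⟩
  have hpz : p ≠ 0 := hp.ne_zero
  -- divisibility of entries for members of Δ
  have hdvd : ∀ γ : Matrix.SpecialLinearGroup (Fin n) ℤ, γ ∈ Δ → ∀ i j,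
      (p : ℤ) ∣ ((γ : Matrix (Fin n) (Fin n) ℤ) - 1) i j := by
    intro γ hγ i j
    rw [hΔ, MonoidHom.mem_ker] at hγ
    have h1 : (((Matrix.SpecialLinearGroup.map (n := Fin n) (Int.castRingHom (ZMod p))) γ :
        Matrix.SpecialLinearGroup (Fin n) (ZMod p)) : Matrix (Fin n) (Fin n) (ZMod p)) i j
        = (1 : Matrix (Fin n) (Fin n) (ZMod p)) i j := by
      rw [hγ, Matrix.SpecialLinearGroup.coe_one]
    rw [Matrix.SpecialLinearGroup.map_apply_coe, RingHom.mapMatrix_apply,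
      Matrix.map_apply] at h1
    rw [← ZMod.intCast_zmod_eq_zero_iff_dvd, Matrix.sub_apply, Int.cast_sub]
    simp only [eq_intCast, Int.cast_id] at h1 ⊢
    rw [h1]
    simp [Matrix.one_apply, apply_ite (Int.cast : ℤ → ZMod p)]
  -- the additive "logarithm" map
  set f : Δ → Matrix (Fin n) (Fin n) (ZMod p) :=
    fun γ => fmat p ((γ : Matrix.SpecialLinearGroup (Fin n) ℤ) :
      Matrix (Fin n) (Fin n) ℤ) with hfdef
  have hfone : f 1 = 0 := by
    show fmat p _ = 0
    rw [show (((1 : Δ) : Matrix.SpecialLinearGroup (Fin n) ℤ) :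
      Matrix (Fin n) (Fin n) ℤ) = 1 from rfl]
    exact fmat_one p
  have hfmul : ∀ a b : Δ, f (a * b) = f a + f b := by
    intro a b
    show fmat p _ = fmat p _ + fmat p _
    rw [show (((a * b : Δ) : Matrix.SpecialLinearGroup (Fin n) ℤ) :
        Matrix (Fin n) (Fin n) ℤ) =
      ((a : Matrix.SpecialLinearGroup (Fin n) ℤ) : Matrix (Fin n) (Fin n) ℤ) *
      ((b : Matrix.SpecialLinearGroup (Fin n) ℤ) : Matrix (Fin n) (Fin n) ℤ) from rfl]
    exact fmat_mul p hpz (hdvd _ a.2) (hdvd _ b.2)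
  set F : Δ →* Multiplicative (Matrix (Fin n) (Fin n) (ZMod p)) :=
    MonoidHom.mk' (fun γ => Multiplicative.ofAdd (f γ))
      (fun a b => by
        show Multiplicative.ofAdd (f (a * b)) = Multiplicative.ofAdd (f a + f b)
        rw [hfmul]) with hFdef
  -- main finset statement
  have main : ∀ S : Finset Δ,
      ProfinitelyDense (Subgroup.closure (S : Set Δ)) → n ^ 2 - 1 ≤ S.card := by
    intro S hS
    set W : Submodule (ZMod p) (Matrix (Fin n) (Fin n) (ZMod p)) :=
      Submodule.span (ZMod p) ((S.image f : Finset _) : Set _) with hWdef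
    have hcl : ∀ x : Δ, x ∈ Subgroup.closure (S : Set Δ) → f x ∈ W := by
      intro x hx
      refine Subgroup.closure_induction
        (fun y hy => Submodule.subset_span ?_) ?_ ?_ ?_ hx
      · exact Finset.mem_coe.mpr (Finset.mem_image_of_mem f (Finset.mem_coe.mp hy))
      · rw [hfone]; exact W.zero_mem
      · intro a b _ _ ha hb; rw [hfmul]; exact W.add_mem ha hb
      · intro a _ ha
        have h0 : f a + f a⁻¹ = 0 := by rw [← hfmul, mul_inv_cancel, hfone]
        rw [eq_neg_of_add_eq_zero_right h0]
        exact W.neg_mem ha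
    have hrange : ∀ g : Δ, f g ∈ W := by
      intro g
      obtain ⟨h, hh, k, hk, rfl⟩ := hS F.ker inferInstance inferInstance g
      have hk0 : f k = 0 := by
        have h1 : Multiplicative.ofAdd (f k) = 1 := hk
        simpa using h1
      rw [hfmul, hk0, add_zero]
      exact hcl h hh
    -- witnesses: off-diagonal
    have hoffW : ∀ i j : Fin n, i ≠ j → Matrix.single i j (1 : ZMod p) ∈ W := by
      intro i j hij
      have htr : Matrix.transvection i j ((p : ℤ)) =
          1 + (p : ℤ) • Matrix.single i j (1 : ℤ) := by
        have := transvection_eq p i j 1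
        rwa [mul_one] at this
      set γ : Matrix.SpecialLinearGroup (Fin n) ℤ :=
        ⟨Matrix.transvection i j ((p : ℤ)), by
          simp [Matrix.det_transvection_of_ne, hij]⟩ with hγdef
      have hmem : γ ∈ Δ := by
        rw [hΔ, MonoidHom.mem_ker]
        apply Subtype.ext
        rw [Matrix.SpecialLinearGroup.map_apply_coe, RingHom.mapMatrix_apply,
          Matrix.SpecialLinearGroup.coe_one]
        show (Matrix.transvection i j ((p : ℤ))).map _ = 1
        rw [htr]
        exact redmod_one_add_smul p _
      have hval : f ⟨γ, hmem⟩ = Matrix.single i j (1 : ZMod p) := by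
        show fmat p (Matrix.transvection i j ((p : ℤ))) = _
        rw [htr, fmat_one_add_smul p hpz, map_sb]
        norm_num
      have := hrange ⟨γ, hmem⟩
      rwa [hval] at this
    -- witnesses: diagonal differences
    have hdiagW : ∀ i j : Fin n, i ≠ j →
        Matrix.single i i (1 : ZMod p) - Matrix.single j j (1 : ZMod p) ∈ W := by
      intro i j hij
      set M : Matrix (Fin n) (Fin n) ℤ :=
        Matrix.transvection i j (-1 : ℤ) * Matrix.transvection j i (-(p : ℤ)) *
          Matrix.transvection i j 1 with hMdef
      have hMeq := triple_eq p i j hij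
      have hdet : M.det = 1 := by
        rw [hMdef]
        rw [Matrix.det_mul, Matrix.det_mul]
        simp [Matrix.det_transvection_of_ne, hij, hij.symm]
      set γ : Matrix.SpecialLinearGroup (Fin n) ℤ := ⟨M, hdet⟩ with hγdef
      have hmem : γ ∈ Δ := by
        rw [hΔ, MonoidHom.mem_ker]
        apply Subtype.ext
        rw [Matrix.SpecialLinearGroup.map_apply_coe, RingHom.mapMatrix_apply,
          Matrix.SpecialLinearGroup.coe_one]
        show M.map _ = 1
        rw [hMdef, hMeq]
        exact redmod_one_add_smul p _
      have hval : f ⟨γ, hmem⟩ =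
          Matrix.single i i (1 : ZMod p) - Matrix.single j j (1 : ZMod p) +
            Matrix.single i j (1 : ZMod p) - Matrix.single j i (1 : ZMod p) := by
        show fmat p M = _
        rw [hMdef, hMeq, fmat_one_add_smul p hpz]
        ext a b
        simp [Matrix.map_apply, Matrix.sub_apply, Matrix.add_apply, Matrix.single,
          Matrix.of_apply, apply_ite (Int.cast : ℤ → ZMod p)]
      have hDW := hrange ⟨γ, hmem⟩
      rw [hval] at hDW
      have hrw : Matrix.single i i (1 : ZMod p) - Matrix.single j j (1 : ZMod p) =
          (Matrix.single i i (1 : ZMod p) - Matrix.single j j (1 : ZMod p) +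
            Matrix.single i j (1 : ZMod p) - Matrix.single j i (1 : ZMod p)) -
            Matrix.single i j (1 : ZMod p) + Matrix.single j i (1 : ZMod p) := by abel
      rw [hrw]
      exact W.add_mem (W.sub_mem hDW (hoffW i j hij)) (hoffW j i hij.symm)
    have hlow := rank_lower_bound hn W hoffW hdiagW
    have hupp : Module.finrank (ZMod p) W ≤ (S.image f).card :=
      finrank_span_finset_le_card (S.image f)
    have := Finset.card_image_le (s := S) (f := f)
    omega
  refine ⟨main, ?_⟩
  intro S hfin _ hdense
  have h1 := main hfin.toFinset (by rwa [Set.Finite.coe_toFinset])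
  rwa [Set.ncard_eq_toFinset_card S hfin]
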